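/- For any matrix-valued differentiable family X(t) of square matrices, d/dt exp(X(t)) = ∫₀¹ exp(x·X(t)) · X′(t) · exp((1−x)·X(t)) dx. -/

import Mathlib

open Matrix intervalIntegral

attribute [local instance] Matrix.linftyOpNormedRing Matrix.linftyOpNormedAlgebra

section Aux

variable {𝔸 : Type*} [NormedRing 𝔸] [NormedAlgebra ℝ 𝔸] [CompleteSpace 𝔸]

/-- The integrand in the Duhamel formula, as a function of two matrices. -/
lemma duhamel_integrand_deriv (A B : 𝔸) (x : ℝ) :
    HasDerivAt (fun x : ℝ => NormedSpace.exp (x • B) * NormedSpace.exp ((1 - x) • A))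
      (NormedSpace.exp (x • B) * (B - A) * NormedSpace.exp ((1 - x) • A)) x := by
  have h1 : HasDerivAt (fun x : ℝ => NormedSpace.exp (x • B))
      (NormedSpace.exp (x • B) * B) x := hasDerivAt_exp_smul_const B x
  have h2' : HasDerivAt (fun u : ℝ => NormedSpace.exp (u • A))
      (A * NormedSpace.exp ((1 - x) • A)) (1 - x) := hasDerivAt_exp_smul_const' A (1 - x)
  have hlin : HasDerivAt (fun x : ℝ => 1 - x) (-1) x := by
    simpa using (hasDerivAt_id x).const_sub 1
  have h2 : HasDerivAt (fun x : ℝ => NormedSpace.exp ((1 - x) • A))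
      ((-1 : ℝ) • (A * NormedSpace.exp ((1 - x) • A))) x := h2'.scomp x hlin
  have := h1.mul h2
  convert this using 1
  · rfl
  simp only [neg_smul, one_smul, smul_eq_mul, mul_neg]
  noncomm_ring

/-- Duhamel / FTC identity: `exp B - exp A = ∫₀¹ exp(xB) (B - A) exp((1-x)A)`. -/
lemma duhamel_identity (A B : 𝔸) :
    NormedSpace.exp B - NormedSpace.exp A =
      ∫ x in (0:ℝ)..1,
        NormedSpace.exp (x • B) * (B - A) * NormedSpace.exp ((1 - x) • A) := by
  have hcont : Continuous fun x : ℝ =>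
      NormedSpace.exp (x • B) * (B - A) * NormedSpace.exp ((1 - x) • A) := by
    apply Continuous.mul
    · exact ((@NormedSpace.exp_continuous 𝔸 _ (NormedAlgebra.restrictScalars ℚ ℝ 𝔸) _).comp (continuous_id.smul continuous_const)).mul
        continuous_const
    · exact (@NormedSpace.exp_continuous 𝔸 _ (NormedAlgebra.restrictScalars ℚ ℝ 𝔸) _).comp ((continuous_const.sub continuous_id).smul
        continuous_const)
  have := intervalIntegral.integral_eq_sub_of_hasDerivAt
    (f := fun x : ℝ => NormedSpace.exp (x • B) * NormedSpace.exp ((1 - x) • A))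
    (fun x _ => duhamel_integrand_deriv A B x)
    (hcont.intervalIntegrable 0 1)
  rw [this]
  simp [NormedSpace.exp_zero]

/-- Directional derivative of `exp` at `A` in direction `B`. -/
lemma hasDerivAt_exp_dir (A B : 𝔸) :
    HasDerivAt (fun s : ℝ => NormedSpace.exp (A + s • B))
      (∫ x in (0:ℝ)..1,
        NormedSpace.exp (x • A) * B * NormedSpace.exp ((1 - x) • A)) 0 := by
  set Φ : ℝ → 𝔸 := fun s => ∫ x in (0:ℝ)..1,
    NormedSpace.exp (x • (A + s • B)) * B * NormedSpace.exp ((1 - x) • A) with hΦ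
  have key : ∀ s : ℝ, NormedSpace.exp (A + s • B) - NormedSpace.exp A = s • Φ s := by
    intro s
    rw [duhamel_identity A (A + s • B)]
    simp only [add_sub_cancel_left, hΦ]
    rw [← intervalIntegral.integral_smul]
    congr 1
    ext x
    rw [mul_smul_comm, smul_mul_assoc]
  have hΦcont : Continuous Φ := by
    apply intervalIntegral.continuous_parametric_intervalIntegral_of_continuous'
      (μ := MeasureTheory.volume)
    apply Continuous.mul
    · apply Continuous.mul
      · exact (@NormedSpace.exp_continuous 𝔸 _ (NormedAlgebra.restrictScalars ℚ ℝ 𝔸) _).comp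
          (continuous_snd.smul (continuous_const.add (continuous_fst.smul continuous_const)))
      · exact continuous_const
    · exact (@NormedSpace.exp_continuous 𝔸 _ (NormedAlgebra.restrictScalars ℚ ℝ 𝔸) _).comp
        ((continuous_const.sub continuous_snd).smul continuous_const)
  have hΦ0 : Φ 0 = ∫ x in (0:ℝ)..1,
      NormedSpace.exp (x • A) * B * NormedSpace.exp ((1 - x) • A) := by
    simp [hΦ]
  rw [hasDerivAt_iff_tendsto_slope]
  rw [← hΦ0]
  have heq : ∀ᶠ s in nhdsWithin 0 {(0:ℝ)}ᶜ,
      slope (fun s : ℝ => NormedSpace.exp (A + s • B)) 0 s = Φ s := by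
    filter_upwards [self_mem_nhdsWithin] with s hs
    have hs0 : s ≠ 0 := hs
    rw [slope_def_module]
    have h0 : NormedSpace.exp (A + (0:ℝ) • B) = NormedSpace.exp A := by simp
    rw [h0, sub_zero, key s, smul_smul, inv_mul_cancel₀ hs0, one_smul]
  exact Filter.Tendsto.congr' (heq.mono fun s h => h.symm)
    ((hΦcont.tendsto 0).mono_left nhdsWithin_le_nhds)

end Aux

theorem duhamel_deriv_exp {d : Type*} [Fintype d] [DecidableEq d]
    (X : ℝ → Matrix d d ℂ) (X' : Matrix d d ℂ) (t : ℝ)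
    (hX : HasDerivAt X X' t) :
    HasDerivAt (fun s => NormedSpace.exp (X s))
      (∫ x in (0:ℝ)..1,
        NormedSpace.exp (x • X t) * X' * NormedSpace.exp ((1 - x) • X t)) t := by
  have hA : AnalyticAt ℝ (NormedSpace.exp) (X t) := NormedSpace.exp_analytic (X t)
  have hf : HasFDerivAt (NormedSpace.exp)
      (fderiv ℝ (NormedSpace.exp) (X t)) (X t) :=
    hA.differentiableAt.hasFDerivAt
  have hlin : HasDerivAt (fun s : ℝ => X t + s • X') X' 0 := by
    exact (((hasDerivAt_id (0:ℝ)).smul_const X').const_add (X t)).congr_deriv (one_smul _ _)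
  have h2 : HasDerivAt (fun s : ℝ => NormedSpace.exp (X t + s • X'))
      (fderiv ℝ (NormedSpace.exp) (X t) X') 0 := by
    have hf' : HasFDerivAt (NormedSpace.exp)
        (fderiv ℝ (NormedSpace.exp) (X t)) (X t + (0:ℝ) • X') := by
      simpa using hf
    exact hf'.comp_hasDerivAt 0 hlin
  have h3 := hasDerivAt_exp_dir (X t) X'
  have hval : fderiv ℝ (NormedSpace.exp) (X t) X' =
      ∫ x in (0:ℝ)..1,
        NormedSpace.exp (x • X t) * X' * NormedSpace.exp ((1 - x) • X t) :=
    h2.unique h3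
  have h1 : HasDerivAt (fun s => NormedSpace.exp (X s))
      (fderiv ℝ (NormedSpace.exp) (X t) X') t := hf.comp_hasDerivAt t hX
  rwa [hval] at h1
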